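/- arXiv:1508.02853 — 3 statements merged into one kernel-verified Lean document; each statement's English description precedes it below -/
import Mathlib

section
/- Let η₁, η₂, … be independent real-valued random variables such that (i) sup_i E[e^{δη_i}] < ∞ for some δ > 0, (ii) lim_{u→∞} sup_i E[|η_i| 1_{η_i ≤ -u}] = 0, and (iii) limsup_{n→∞} (1/n) Σ_{i=1}^n E[η_i] < 0. Then there exist constants c₃ > 0 and c₄ > 0 such that P(sup_{k≥1} Σ_{i=1}^k η_i > x) ≤ c₃ e^{-c₄ x} for all x ≥ 0. -/
open MeasureTheory ProbabilityTheory Filter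

lemma aux1 {y : ℝ} (hy : 0 ≤ y) : Real.exp y ≤ 1 + y + y^2 * Real.exp y := by
  rcases le_or_gt y 1 with h1 | h1
  · have hmul : Real.exp y * Real.exp (-y) = 1 := by rw [← Real.exp_add]; simp
    have h2 : Real.exp y * (1 - y) ≤ 1 := by
      nlinarith [Real.add_one_le_exp (-y), Real.exp_pos y]
    nlinarith [mul_le_mul_of_nonneg_right h2 (by linarith : (0:ℝ) ≤ 1 + y)]
  · nlinarith [Real.exp_pos y, mul_nonneg (by nlinarith : (0:ℝ) ≤ y^2 - 1) (Real.exp_pos y).le]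

lemma auxL1 (x : ℝ) : Real.exp x ≤ 1 + x + x^2 * Real.exp |x| := by
  rcases le_or_gt 0 x with hx | hx
  · rw [abs_of_nonneg hx]; exact aux1 hx
  · have hs : Real.sinh x < x := Real.sinh_lt_self_iff.mpr hx
    rw [Real.sinh_eq] at hs
    have := aux1 (neg_nonneg.mpr hx.le)
    rw [abs_of_neg hx]
    nlinarith [Real.exp_pos (-x)]

lemma auxL2 {δ lam u t : ℝ} (hδ : 0 < δ) (hlam : 0 < lam) (hlam2 : lam ≤ δ/2) (hu : 0 ≤ u) :
    Real.exp (lam * t) ≤ 1 + lam * t + lam * (if t ≤ -u then |t| else 0)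
      + lam^2 * (u^2 * Real.exp (δ*u)) + lam^2 * (16/δ^2) * Real.exp (δ*t) := by
  have hpos1 : 0 ≤ lam^2 * (u^2 * Real.exp (δ*u)) :=
    mul_nonneg (sq_nonneg _) (mul_nonneg (sq_nonneg _) (Real.exp_pos _).le)
  have hpos2 : 0 ≤ lam^2 * (16/δ^2) * Real.exp (δ*t) :=
    mul_nonneg (mul_nonneg (sq_nonneg _) (by positivity)) (Real.exp_pos _).le
  rcases le_or_gt t (-u) with h1 | h1
  · rw [if_pos h1]
    have ht0 : t ≤ 0 := h1.trans (by linarith)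
    have : Real.exp (lam * t) ≤ 1 := Real.exp_le_one_iff.mpr (by nlinarith)
    rw [abs_of_nonpos ht0]
    nlinarith
  · rw [if_neg (not_le.mpr h1)]
    have key := auxL1 (lam * t)
    rcases le_or_gt t 0 with h2 | h2
    · have habs : |lam * t| = lam * (-t) := by rw [abs_of_nonpos (by nlinarith)]; ring
      have h3 : lam * (-t) ≤ δ * u := by nlinarith
      have h4 : Real.exp (lam * t) ≤ 1 + lam*t + (lam*t)^2 * Real.exp (δ*u) := by
        have := Real.exp_le_exp.mpr h3
        nlinarith [sq_nonneg (lam*t), Real.exp_pos (lam*t), habs ▸ key]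
      have h5 : (lam*t)^2 ≤ lam^2 * u^2 := by
        nlinarith [mul_nonneg (sq_nonneg lam) (mul_nonneg (by linarith : (0:ℝ) ≤ u + t) (by linarith : (0:ℝ) ≤ u - t))]
      nlinarith [Real.exp_pos (δ*u)]
    · have habs : |lam * t| = lam * t := abs_of_nonneg (by positivity)
      rw [habs] at key
      have hts : t^2 ≤ (16/δ^2) * Real.exp (δ*t/2) := by
        have h6 := Real.add_one_le_exp (δ*t/4)
        have h7 : (Real.exp (δ*t/4))^2 = Real.exp (δ*t/2) := by
          rw [sq, ← Real.exp_add]; ring_nf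
        have e0 : 0 ≤ δ*t/4 := by positivity
        have e2 : (δ*t/4)^2 ≤ (Real.exp (δ*t/4))^2 := pow_le_pow_left₀ e0 (by linarith) 2
        rw [h7] at e2
        have hδ2 : (0:ℝ) < δ^2 := by positivity
        rw [div_mul_eq_mul_div, le_div_iff₀ hδ2]
        nlinarith
      have h8 : Real.exp (lam * t) ≤ Real.exp (δ*t/2) := Real.exp_le_exp.mpr (by nlinarith)
      have h9 : (Real.exp (δ*t/2))^2 = Real.exp (δ*t) := by rw [sq, ← Real.exp_add]; ring_nf
      have h10 : t^2 * Real.exp (lam*t) ≤ (16/δ^2) * Real.exp (δ*t) := by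
        calc t^2 * Real.exp (lam*t) ≤ ((16/δ^2) * Real.exp (δ*t/2)) * Real.exp (δ*t/2) := by
              apply mul_le_mul hts h8 (Real.exp_pos _).le (by positivity)
          _ = (16/δ^2) * Real.exp (δ*t) := by rw [← h9]; ring
      nlinarith [sq_nonneg lam, sq_nonneg t, mul_le_mul_of_nonneg_left h10 (sq_nonneg lam)]

lemma auxL3 {Ω : Type*} [MeasurableSpace Ω] (μ : MeasureTheory.Measure Ω)
    [MeasureTheory.IsProbabilityMeasure μ]
    (X : Ω → ℝ) (hX : Measurable X) (hXint : MeasureTheory.Integrable X μ)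
    {δ lam u : ℝ} (hδ : 0 < δ) (hlam : 0 < lam) (hlam2 : lam ≤ δ/2) (hu : 0 ≤ u)
    (hexp : MeasureTheory.Integrable (fun ω => Real.exp (δ * X ω)) μ) :
    ∫ ω, Real.exp (lam * X ω) ∂μ ≤
      1 + lam * ∫ ω, X ω ∂μ
      + lam * (∫ ω, Set.indicator {ω | X ω ≤ -u} (fun ω => |X ω|) ω ∂μ)
      + lam^2 * (u^2 * Real.exp (δ*u))
      + lam^2 * (16/δ^2) * ∫ ω, Real.exp (δ * X ω) ∂μ := by
  have hset : MeasurableSet {ω | X ω ≤ -u} := hX measurableSet_Iic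
  have hind_int : MeasureTheory.Integrable
      (Set.indicator {ω | X ω ≤ -u} (fun ω => |X ω|)) μ :=
    hXint.abs.indicator hset
  have hlamX_int : MeasureTheory.Integrable (fun ω => Real.exp (lam * X ω)) μ := by
    refine MeasureTheory.Integrable.mono' ((MeasureTheory.integrable_const 1).add hexp)
      ((hX.const_mul lam).exp.aestronglyMeasurable) (Filter.Eventually.of_forall fun ω => ?_)
    rw [Real.norm_eq_abs, abs_of_nonneg (Real.exp_pos _).le]
    rcases le_or_gt 0 (X ω) with h | h
    · have : Real.exp (lam * X ω) ≤ Real.exp (δ * X ω) :=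
        Real.exp_le_exp.mpr (by nlinarith)
      simpa using this.trans (by linarith [Real.exp_pos (δ * X ω)])
    · have : Real.exp (lam * X ω) ≤ 1 := Real.exp_le_one_iff.mpr (by nlinarith)
      simpa using this.trans (by linarith [Real.exp_pos (δ * X ω)])
  have hg_int : MeasureTheory.Integrable (fun ω =>
      1 + lam * X ω + lam * Set.indicator {ω | X ω ≤ -u} (fun ω => |X ω|) ω
      + lam^2 * (u^2 * Real.exp (δ*u)) + lam^2 * (16/δ^2) * Real.exp (δ * X ω)) μ := by
    exact ((((MeasureTheory.integrable_const 1).add (hXint.const_mul lam)).add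
      (hind_int.const_mul lam)).add (MeasureTheory.integrable_const _)).add
      (hexp.const_mul _)
  have hmono := MeasureTheory.integral_mono hlamX_int hg_int (fun ω => by
    have h2 := auxL2 (t := X ω) hδ hlam hlam2 hu
    simp only [Set.indicator_apply, Set.mem_setOf_eq]
    convert h2 using 3)
  refine hmono.trans (le_of_eq ?_)
  rw [MeasureTheory.integral_add, MeasureTheory.integral_add, MeasureTheory.integral_add,
    MeasureTheory.integral_add, MeasureTheory.integral_const, MeasureTheory.integral_const,
    MeasureTheory.integral_const_mul, MeasureTheory.integral_const_mul,
    MeasureTheory.integral_const_mul]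
  · simp
  · exact MeasureTheory.integrable_const _
  · exact hXint.const_mul lam
  · exact (MeasureTheory.integrable_const _).add (hXint.const_mul lam)
  · exact hind_int.const_mul lam
  · exact ((MeasureTheory.integrable_const _).add (hXint.const_mul lam)).add
      (hind_int.const_mul lam)
  · exact MeasureTheory.integrable_const _
  · exact (((MeasureTheory.integrable_const _).add (hXint.const_mul lam)).add
      (hind_int.const_mul lam)).add (MeasureTheory.integrable_const _)
  · exact hexp.const_mul _

lemma auxInt {Ω : Type*} [MeasurableSpace Ω] (μ : MeasureTheory.Measure Ω)
    [MeasureTheory.IsProbabilityMeasure μ]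
    (X : Ω → ℝ) (hX : Measurable X) {δ lam : ℝ} (hlam : 0 ≤ lam) (hlam2 : lam ≤ δ)
    (hexp : MeasureTheory.Integrable (fun ω => Real.exp (δ * X ω)) μ) :
    MeasureTheory.Integrable (fun ω => Real.exp (lam * X ω)) μ := by
  refine MeasureTheory.Integrable.mono' ((MeasureTheory.integrable_const 1).add hexp)
    ((hX.const_mul lam).exp.aestronglyMeasurable) (Filter.Eventually.of_forall fun ω => ?_)
  rw [Real.norm_eq_abs, abs_of_nonneg (Real.exp_pos _).le]
  rcases le_or_gt 0 (X ω) with h | h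
  · have : Real.exp (lam * X ω) ≤ Real.exp (δ * X ω) :=
      Real.exp_le_exp.mpr (by nlinarith)
    simpa using this.trans (by linarith [Real.exp_pos (δ * X ω)])
  · have : Real.exp (lam * X ω) ≤ 1 := Real.exp_le_one_iff.mpr (by nlinarith)
    simpa using this.trans (by linarith [Real.exp_pos (δ * X ω)])


/-- Auxiliary lemma: independent r.v.s with uniformly bounded exponential moments,
uniformly integrable negative parts, and negative Cesàro-limsup means admit an
exponential bound on the tail of the running maximum of partial sums. -/
theorem lundberg_aux_lemma
    {Ω : Type*} [MeasurableSpace Ω] (μ : Measure Ω) [IsProbabilityMeasure μ]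
    (η : ℕ → Ω → ℝ) (hmeas : ∀ i, Measurable (η i))
    (hindep : iIndepFun η μ)
    (hint : ∀ i, Integrable (η i) μ)
    (δ : ℝ) (hδ : 0 < δ)
    (hexpint : ∀ i, Integrable (fun ω => Real.exp (δ * η i ω)) μ)
    (hC1 : ∃ C : ℝ, ∀ i, ∫ ω, Real.exp (δ * η i ω) ∂μ ≤ C)
    (hC2 : ∀ ε > (0 : ℝ), ∃ u₀ : ℝ, ∀ u ≥ u₀, ∀ i,
      ∫ ω, Set.indicator {ω | η i ω ≤ -u} (fun ω => |η i ω|) ω ∂μ ≤ ε)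
    (hC3 : Filter.limsup
      (fun n : ℕ => (1 / (n : ℝ)) * ∑ i ∈ Finset.range n, ∫ ω, η i ω ∂μ) atTop < 0) :
    ∃ c₃ > (0 : ℝ), ∃ c₄ > (0 : ℝ), ∀ x ≥ (0 : ℝ),
      μ {ω | ∃ k : ℕ, x < ∑ i ∈ Finset.range (k + 1), η i ω}
        ≤ ENNReal.ofReal (c₃ * Real.exp (-c₄ * x)) := by
  classical
  obtain ⟨C, hC⟩ := hC1
  set m : ℕ → ℝ := fun i => ∫ ω, η i ω ∂μ with hm
  -- expectations are bounded above
  have hmean : ∀ i, m i ≤ (C - 1) / δ := by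
    intro i
    have h2 : ∫ ω, (δ * η i ω + 1) ∂μ ≤ ∫ ω, Real.exp (δ * η i ω) ∂μ :=
      integral_mono (((hint i).const_mul δ).add (integrable_const 1)) (hexpint i)
        (fun ω => Real.add_one_le_exp _)
    rw [integral_add ((hint i).const_mul δ) (integrable_const 1), integral_const_mul,
      integral_const] at h2
    simp only [measure_univ, probReal_univ, ENNReal.toReal_one, smul_eq_mul, one_mul, mul_one] at h2
    have h3 := h2.trans (hC i)
    rw [le_div_iff₀ hδ]
    linarith
  -- boundedness of the Cesàro means
  have hbdd : IsBoundedUnder (· ≤ ·) atTop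
      (fun n : ℕ => (1 / (n : ℝ)) * ∑ i ∈ Finset.range n, m i) := by
    refine isBoundedUnder_of ⟨max 0 ((C - 1) / δ), fun n => ?_⟩
    rcases Nat.eq_zero_or_pos n with h | h
    · simp [h]
    · have hn : (0:ℝ) < n := by exact_mod_cast h
      have hs : ∑ i ∈ Finset.range n, m i ≤ n * ((C - 1) / δ) := by
        calc ∑ i ∈ Finset.range n, m i ≤ ∑ _i ∈ Finset.range n, (C - 1) / δ :=
              Finset.sum_le_sum fun i _ => hmean i
          _ = n * ((C - 1) / δ) := by simp [mul_comm]
      have : (1 / (n:ℝ)) * ∑ i ∈ Finset.range n, m i ≤ (C - 1) / δ := by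
        rw [one_div, inv_mul_le_iff₀ hn]
        linarith [hs]
      exact this.trans (le_max_right _ _)
  set L := Filter.limsup (fun n : ℕ => (1 / (n : ℝ)) * ∑ i ∈ Finset.range n, m i) atTop
  set a : ℝ := -L / 8 with ha_def
  have ha : 0 < a := by simp only [ha_def]; linarith
  have hev : ∀ᶠ n : ℕ in atTop,
      (1 / (n : ℝ)) * ∑ i ∈ Finset.range n, m i < -(4 * a) :=
    eventually_lt_of_limsup_lt (by simp only [ha_def]; linarith) hbdd
  obtain ⟨N, hN⟩ := eventually_atTop.mp hev
  set B : ℝ := (∑ i ∈ Finset.range N, |m i|) + 4 * a * N with hB_def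
  have hB0 : 0 ≤ B := by
    have : (0:ℝ) ≤ ∑ i ∈ Finset.range N, |m i| :=
      Finset.sum_nonneg fun i _ => abs_nonneg _
    positivity
  have hsum : ∀ n : ℕ, ∑ i ∈ Finset.range n, m i ≤ -(4 * a) * n + B := by
    intro n
    rcases lt_or_ge n N with h | h
    · have h1 : ∑ i ∈ Finset.range n, m i ≤ ∑ i ∈ Finset.range N, |m i| := by
        calc ∑ i ∈ Finset.range n, m i ≤ ∑ i ∈ Finset.range n, |m i| :=
              Finset.sum_le_sum fun i _ => le_abs_self _
          _ ≤ ∑ i ∈ Finset.range N, |m i| :=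
              Finset.sum_le_sum_of_subset_of_nonneg
                (Finset.range_subset_range.mpr h.le) (fun i _ _ => abs_nonneg _)
      have h2 : (n:ℝ) ≤ N := by exact_mod_cast h.le
      simp only [hB_def]
      nlinarith
    · rcases Nat.eq_zero_or_pos n with h0 | h0
      · simp [h0, hB0]
      · have hn : (0:ℝ) < n := by exact_mod_cast h0
        have := hN n h
        rw [one_div, inv_mul_lt_iff₀ hn] at this
        nlinarith
  -- choose u
  obtain ⟨u₀, hu₀⟩ := hC2 a ha
  set u : ℝ := max u₀ 0 with hu_def
  have hu : 0 ≤ u := le_max_right _ _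
  have hind : ∀ i, ∫ ω, Set.indicator {ω | η i ω ≤ -u} (fun ω => |η i ω|) ω ∂μ ≤ a :=
    hu₀ u (le_max_left _ _)
  -- constants
  have hCpos : 0 < C := lt_of_lt_of_le (mgf_pos (hexpint 0)) (hC 0)
  set M : ℝ := u ^ 2 * Real.exp (δ * u) + 16 / δ ^ 2 * C with hM_def
  have hM : 0 < M := by
    have h1 : (0:ℝ) ≤ u ^ 2 * Real.exp (δ * u) := by positivity
    have h2 : (0:ℝ) < 16 / δ ^ 2 * C := by positivity
    rw [hM_def]; linarith
  set lam : ℝ := min (δ / 2) (a / M) with hlam_def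
  have hlam : 0 < lam := lt_min (by linarith) (by positivity)
  have hlam2 : lam ≤ δ / 2 := min_le_left _ _
  have hlamM : lam * M ≤ a := by
    have : lam ≤ a / M := min_le_right _ _
    rw [← le_div_iff₀ hM]
    exact this
  clear_value L a B u M lam
  -- per-variable mgf bound
  have hbound : ∀ i, mgf (η i) μ lam ≤ Real.exp (lam * (m i + 2 * a)) := by
    intro i
    have h1 := auxL3 μ (η i) (hmeas i) (hint i) hδ hlam hlam2 hu (hexpint i)
    have h2 : mgf (η i) μ lam = ∫ ω, Real.exp (lam * η i ω) ∂μ := rfl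
    rw [h2]
    have h3 : ∫ ω, Real.exp (lam * η i ω) ∂μ ≤ 1 + lam * (m i + 2 * a) := by
      have hc := hC i
      have hi := hind i
      have e1 : lam ^ 2 * (u ^ 2 * Real.exp (δ * u)) + lam ^ 2 * (16 / δ ^ 2)
          * ∫ ω, Real.exp (δ * η i ω) ∂μ ≤ lam * a := by
        have e2 : lam ^ 2 * (16 / δ ^ 2) * ∫ ω, Real.exp (δ * η i ω) ∂μ
            ≤ lam ^ 2 * (16 / δ ^ 2) * C := by
          gcongr
        have e4 : lam ^ 2 * (u ^ 2 * Real.exp (δ * u)) + lam ^ 2 * (16 / δ ^ 2) * C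
            = lam * (lam * M) := by rw [hM_def]; ring
        have e5 : lam * (lam * M) ≤ lam * a := mul_le_mul_of_nonneg_left hlamM hlam.le
        linarith
      nlinarith [mul_le_mul_of_nonneg_left hi hlam.le]
    exact h3.trans (by linarith [Real.add_one_le_exp (lam * (m i + 2 * a))])
  -- mgf of partial sums
  have hmgf : ∀ n : ℕ, mgf (∑ i ∈ Finset.range n, η i) μ lam
      ≤ Real.exp (lam * B - 2 * a * lam * n) := by
    intro n
    rw [hindep.mgf_sum hmeas]
    calc ∏ i ∈ Finset.range n, mgf (η i) μ lam
        ≤ ∏ i ∈ Finset.range n, Real.exp (lam * (m i + 2 * a)) :=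
          Finset.prod_le_prod (fun i _ => mgf_nonneg) (fun i _ => hbound i)
      _ = Real.exp (∑ i ∈ Finset.range n, lam * (m i + 2 * a)) := by
          rw [← Real.exp_sum]
      _ ≤ Real.exp (lam * B - 2 * a * lam * n) := by
          apply Real.exp_le_exp.mpr
          have : ∑ i ∈ Finset.range n, lam * (m i + 2 * a)
              = lam * ((∑ i ∈ Finset.range n, m i) + 2 * a * n) := by
            rw [← Finset.mul_sum, Finset.sum_add_distrib, Finset.sum_const,
              Finset.card_range, nsmul_eq_mul]
            ring
          rw [this]
          have := hsum n
          nlinarith [hsum n]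
  -- integrability of exp(lam * sum)
  have hintsum : ∀ n : ℕ, Integrable
      (fun ω => Real.exp (lam * (∑ i ∈ Finset.range n, η i) ω)) μ :=
    fun n => hindep.integrable_exp_mul_sum hmeas
      (fun i _ => auxInt μ (η i) (hmeas i) hlam.le (by linarith) (hexpint i))
  -- Chernoff for each n
  have hcher : ∀ (x : ℝ) (n : ℕ), μ {ω | x < ∑ i ∈ Finset.range n, η i ω}
      ≤ ENNReal.ofReal (Real.exp (-lam * x) * Real.exp (lam * B - 2 * a * lam * n)) := by
    intro x n
    have h1 : μ {ω | x < ∑ i ∈ Finset.range n, η i ω}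
        ≤ μ {ω | x ≤ (∑ i ∈ Finset.range n, η i) ω} := by
      apply measure_mono
      intro ω hω
      simp only [Set.mem_setOf_eq, Finset.sum_apply] at *
      exact hω.le
    have h2 := measure_ge_le_exp_mul_mgf (μ := μ) (X := ∑ i ∈ Finset.range n, η i)
      x hlam.le (hintsum n)
    have h3 : (μ {ω | x ≤ (∑ i ∈ Finset.range n, η i) ω}).toReal
        ≤ Real.exp (-lam * x) * Real.exp (lam * B - 2 * a * lam * n) := by
      refine h2.trans ?_
      exact mul_le_mul_of_nonneg_left (hmgf n) (Real.exp_pos _).le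
    refine h1.trans ?_
    rw [← ENNReal.ofReal_toReal (measure_ne_top μ _)]
    exact ENNReal.ofReal_le_ofReal h3
  -- assemble
  set r : ℝ := Real.exp (-(2 * a * lam)) with hr_def
  have hr0 : 0 < r := Real.exp_pos _
  have hr1 : r < 1 := Real.exp_lt_one_iff.mpr (by nlinarith)
  refine ⟨Real.exp (lam * B) * (r / (1 - r)),
    mul_pos (Real.exp_pos _) (div_pos hr0 (by linarith)), lam, hlam, fun x hx => ?_⟩
  have hset : {ω | ∃ k : ℕ, x < ∑ i ∈ Finset.range (k + 1), η i ω}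
      = ⋃ k : ℕ, {ω | x < ∑ i ∈ Finset.range (k + 1), η i ω} := by
    ext ω; simp
  rw [hset]
  refine (measure_iUnion_le _).trans ?_
  have hterm : ∀ k : ℕ, μ {ω | x < ∑ i ∈ Finset.range (k + 1), η i ω}
      ≤ ENNReal.ofReal ((Real.exp (-lam * x) * Real.exp (lam * B)) * r ^ (k + 1)) := by
    intro k
    refine (hcher x (k + 1)).trans (le_of_eq ?_)
    congr 1
    rw [← Real.exp_nat_mul, ← Real.exp_add, ← Real.exp_add, ← Real.exp_add]
    congr 1
    push_cast
    ring
  refine (ENNReal.tsum_le_tsum hterm).trans ?_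
  have hsummable : Summable (fun k : ℕ => (Real.exp (-lam * x) * Real.exp (lam * B)) * r ^ (k + 1)) := by
    apply Summable.mul_left
    exact ((summable_geometric_of_lt_one hr0.le hr1).mul_left r).congr
      (fun k => by rw [pow_succ]; ring)
  rw [← ENNReal.ofReal_tsum_of_nonneg (fun k => by positivity) hsummable]
  apply ENNReal.ofReal_le_ofReal
  have htsum : ∑' k : ℕ, (Real.exp (-lam * x) * Real.exp (lam * B)) * r ^ (k + 1)
      = (Real.exp (-lam * x) * Real.exp (lam * B)) * (r / (1 - r)) := by
    rw [tsum_mul_left]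
    congr 1
    have := tsum_geometric_of_lt_one hr0.le hr1
    calc ∑' k : ℕ, r ^ (k + 1) = ∑' k : ℕ, r * r ^ k := by
          apply tsum_congr; intro k; rw [pow_succ]; ring
      _ = r * ∑' k : ℕ, r ^ k := tsum_mul_left
      _ = r * (1 - r)⁻¹ := by rw [this]
      _ = r / (1 - r) := by rw [div_eq_mul_inv]
    -- done
  rw [htsum]
  ring_nf
  exact le_of_eq (by ring)
end

section
/- Consider the inhomogeneous renewal risk model with initial reserve x ≥ 0, premium rate c > 0, independent nonnegative claim sizes Z₁, Z₂, … , and independent nonnegative interarrival times θ₁, θ₂, … (the two sequences mutually independent, θ_i nondegenerate at zero). Assume (C1) sup_i E[e^{γ Z_i}] < ∞ for some γ > 0, (C2) lim_{u→∞} sup_i E[θ_i 1_{θ_i > u}] = 0, and (C3) limsup_{n→∞} (1/n) Σ_{i=1}^n (E[Z_i] − c E[θ_i]) < 0. Then there exist constants c₁ > 0 and c₂ ≥ 0 such that the ruin probability ψ(x) satisfies ψ(x) ≤ e^{-c₁ x} for all x ≥ c₂. -/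
open MeasureTheory ProbabilityTheory Filter

namespace LundbergAux
variable {Ω : Type*} [MeasurableSpace Ω] {μ : Measure Ω}

/-- exp t ≤ 1 + t + t² exp t for t ≥ 0 -/
lemma exp_le_one_add_add (t : ℝ) (ht : 0 ≤ t) :
    Real.exp t ≤ 1 + t + t ^ 2 * Real.exp t := by
  rcases le_or_gt 1 t with h1 | h1
  · have h2 : (0:ℝ) ≤ (t ^ 2 - 1) * Real.exp t :=
      mul_nonneg (by nlinarith) (Real.exp_pos t).le
    nlinarith [Real.exp_pos t]
  · have h2 : 1 - t ≤ Real.exp (-t) := by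
      have := Real.add_one_le_exp (-t); linarith
    have h3 : (1 - t) * Real.exp t ≤ 1 := by
      have := Real.exp_pos t
      calc (1 - t) * Real.exp t ≤ Real.exp (-t) * Real.exp t :=
            mul_le_mul_of_nonneg_right h2 (le_of_lt this)
        _ = 1 := by rw [← Real.exp_add]; simp
    nlinarith [Real.exp_pos t]

/-- exp (-v) ≤ 1 - v + v² for 0 ≤ v ≤ 1 -/
lemma exp_neg_le (v : ℝ) (h0 : 0 ≤ v) (h1 : v ≤ 1) :
    Real.exp (-v) ≤ 1 - v + v ^ 2 := by
  have habs : |(-v)| ≤ 1 := by rw [abs_neg, abs_of_nonneg h0]; exact h1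
  have H := Real.exp_bound habs (by norm_num : 0 < 2)
  simp [Finset.sum_range_succ, Nat.factorial, abs_neg, abs_of_nonneg h0] at H
  rw [abs_le] at H
  nlinarith [H.2, sq_nonneg v]

/-- lintegral of a finite product of independent ℝ≥0∞-valued functions -/
lemma lintegral_prod_range_indep [IsProbabilityMeasure μ] (f : ℕ → Ω → ENNReal)
    (hmeas : ∀ i, Measurable (f i))
    (hind : iIndepFun f μ) (n : ℕ) :
    ∫⁻ ω, ∏ i ∈ Finset.range n, f i ω ∂μ = ∏ i ∈ Finset.range n, ∫⁻ ω, f i ω ∂μ := by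
  induction n with
  | zero => simp
  | succ n ih =>
    have hi : IndepFun (∏ j ∈ Finset.range n, f j) (f n) μ :=
      hind.indepFun_prod_range_succ hmeas n
    have h1 : Measurable (fun ω => ∏ i ∈ Finset.range n, f i ω) :=
      Finset.measurable_prod _ fun i _ => hmeas i
    have hi' : IndepFun (fun ω => ∏ j ∈ Finset.range n, f j ω) (f n) μ := by
      have : (fun ω => ∏ j ∈ Finset.range n, f j ω) = ∏ j ∈ Finset.range n, f j := by
        funext ω; simp [Finset.prod_apply]
      rw [this]; exact hi
    calc ∫⁻ ω, ∏ i ∈ Finset.range (n + 1), f i ω ∂μ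
        = ∫⁻ ω, (∏ i ∈ Finset.range n, f i ω) * f n ω ∂μ := by
          simp_rw [Finset.prod_range_succ]
      _ = (∫⁻ ω, ∏ i ∈ Finset.range n, f i ω ∂μ) * ∫⁻ ω, f n ω ∂μ :=
          lintegral_mul_eq_lintegral_mul_lintegral_of_indepFun''
            h1.aemeasurable (hmeas n).aemeasurable hi'
      _ = ∏ i ∈ Finset.range (n + 1), ∫⁻ ω, f i ω ∂μ := by
          rw [ih, Finset.prod_range_succ]

/-- Chernoff-type bound -/
lemma chernoff {S : Ω → ℝ} (hS : Measurable S) (h x : ℝ) (hh : 0 < h) :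
    μ {ω | x < S ω} ≤ ENNReal.ofReal (Real.exp (-(h * x))) *
        ∫⁻ ω, ENNReal.ofReal (Real.exp (h * S ω)) ∂μ := by
  set g : Ω → ENNReal := fun ω => ENNReal.ofReal (Real.exp (h * S ω)) with hg
  have hgm : AEMeasurable g μ :=
    (ENNReal.measurable_ofReal.comp (Real.measurable_exp.comp (hS.const_mul h))).aemeasurable
  set ε : ENNReal := ENNReal.ofReal (Real.exp (h * x)) with hε
  have hsub : {ω | x < S ω} ⊆ {ω | ε ≤ g ω} := by
    intro ω hω
    exact ENNReal.ofReal_le_ofReal (Real.exp_le_exp.2 (by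
      have : x < S ω := hω
      nlinarith))
  have hM := mul_meas_ge_le_lintegral₀ hgm ε
  have hεpos : ε ≠ 0 := by
    simp [hε, ENNReal.ofReal_eq_zero, not_le, Real.exp_pos]
  have hεtop : ε ≠ ⊤ := ENNReal.ofReal_ne_top
  have h2 : μ {ω | x < S ω} ≤ ε⁻¹ * ∫⁻ ω, g ω ∂μ := by
    rw [mul_comm, ← ENNReal.le_div_iff_mul_le (Or.inl hεpos) (Or.inl hεtop)] at hM
    refine le_trans (le_trans (measure_mono hsub) hM) ?_
    rw [ENNReal.div_eq_inv_mul]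
  have hinv : ε⁻¹ = ENNReal.ofReal (Real.exp (-(h * x))) := by
    rw [hε, ← ENNReal.ofReal_inv_of_pos (Real.exp_pos _), ← Real.exp_neg]
  exact hinv ▸ h2

end LundbergAux

set_option maxHeartbeats 1600000 in
/-- Lundberg-type inequality for the inhomogeneous renewal risk model:
the ruin probability ψ(x) = P(sup_n Σ_{i=1}^n (Z_i − c θ_i) > x) decays exponentially. -/
theorem lundberg_inhomogeneous
    {Ω : Type*} [MeasurableSpace Ω] (μ : Measure Ω) [IsProbabilityMeasure μ]
    (Z θ : ℕ → Ω → ℝ) (c : ℝ) (hc : 0 < c)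
    (hZmeas : ∀ i, Measurable (Z i)) (hθmeas : ∀ i, Measurable (θ i))
    (hZpos : ∀ i ω, 0 ≤ Z i ω) (hθpos : ∀ i ω, 0 ≤ θ i ω)
    (hZindep : iIndepFun Z μ)
    (hθindep : iIndepFun θ μ)
    (hmutindep : IndepFun (fun ω i => Z i ω) (fun ω i => θ i ω) μ)
    (hθnondeg : ∀ i, μ {ω | θ i ω = 0} < 1)
    (hZint : ∀ i, Integrable (Z i) μ) (hθint : ∀ i, Integrable (θ i) μ)
    (γ : ℝ) (hγ : 0 < γ)
    (hexpint : ∀ i, Integrable (fun ω => Real.exp (γ * Z i ω)) μ)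
    (hC1 : ∃ C : ℝ, ∀ i, ∫ ω, Real.exp (γ * Z i ω) ∂μ ≤ C)
    (hC2 : ∀ ε > (0 : ℝ), ∃ u₀ : ℝ, ∀ u ≥ u₀, ∀ i,
      ∫ ω, Set.indicator {ω | u < θ i ω} (θ i) ω ∂μ ≤ ε)
    (hC3 : Filter.limsup
      (fun n : ℕ => (1 / (n : ℝ)) *
        ∑ i ∈ Finset.range n, (∫ ω, Z i ω ∂μ - c * ∫ ω, θ i ω ∂μ)) atTop < 0) :
    ∃ c₁ > (0 : ℝ), ∃ c₂ ≥ (0 : ℝ), ∀ x ≥ c₂,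
      μ {ω | ∃ n : ℕ, x < ∑ i ∈ Finset.range (n + 1), (Z i ω - c * θ i ω)}
        ≤ ENNReal.ofReal (Real.exp (-c₁ * x)) := by
  classical
  obtain ⟨C₀, hC₀⟩ := hC1
  set C : ℝ := max C₀ 1 with hCdef
  have hCbd : ∀ i, ∫ ω, Real.exp (γ * Z i ω) ∂μ ≤ C := fun i => (hC₀ i).trans (le_max_left _ _)
  have hCone : (1:ℝ) ≤ C := le_max_right _ _
  have hCpos : (0:ℝ) < C := lt_of_lt_of_le one_pos hCone
  -- mean bounds
  have hEZnn : ∀ i, 0 ≤ ∫ ω, Z i ω ∂μ := fun i => integral_nonneg (fun ω => hZpos i ω)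
  have hEθnn : ∀ i, 0 ≤ ∫ ω, θ i ω ∂μ := fun i => integral_nonneg (fun ω => hθpos i ω)
  have hEZ : ∀ i, ∫ ω, Z i ω ∂μ ≤ C / γ := by
    intro i
    have hpt : ∀ ω, Z i ω ≤ Real.exp (γ * Z i ω) / γ := by
      intro ω
      rw [le_div_iff₀ hγ]
      have := Real.add_one_le_exp (γ * Z i ω)
      nlinarith
    calc ∫ ω, Z i ω ∂μ ≤ ∫ ω, Real.exp (γ * Z i ω) / γ ∂μ :=
          integral_mono (hZint i) ((hexpint i).div_const γ) hpt
      _ = (∫ ω, Real.exp (γ * Z i ω) ∂μ) / γ := integral_div γ _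
      _ ≤ C / γ := by gcongr; exact (hCbd i)
  -- drift from (C3)
  obtain ⟨δ, hδpos, N, hN1, hdrift⟩ :
      ∃ δ > (0:ℝ), ∃ N : ℕ, 1 ≤ N ∧ ∀ n, N ≤ n →
        ∑ i ∈ Finset.range n, (∫ ω, Z i ω ∂μ - c * ∫ ω, θ i ω ∂μ) ≤ -δ * n := by
    rw [limsup_eq] at hC3
    by_cases hS : {a : ℝ | ∀ᶠ (n : ℕ) in atTop,
        (1 / (n : ℝ)) * ∑ i ∈ Finset.range n, (∫ ω, Z i ω ∂μ - c * ∫ ω, θ i ω ∂μ) ≤ a}.Nonempty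
    · set L := sInf {a : ℝ | ∀ᶠ (n : ℕ) in atTop,
        (1 / (n : ℝ)) * ∑ i ∈ Finset.range n, (∫ ω, Z i ω ∂μ - c * ∫ ω, θ i ω ∂μ) ≤ a} with hLdef
      have hL : L < 0 := hC3
      obtain ⟨a, haS, ha⟩ := exists_lt_of_csInf_lt hS (show L < L/2 by linarith)
      obtain ⟨N₀, hN₀⟩ := eventually_atTop.1 haS
      refine ⟨-L/2, by linarith, max N₀ 1, le_max_right _ _, ?_⟩
      intro n hn
      have hn1 : 1 ≤ n := le_trans (le_max_right _ _) hn
      have hgn := hN₀ n (le_trans (le_max_left _ _) hn)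
      have hnpos : (0:ℝ) < n := by exact_mod_cast hn1
      have heq : ∑ i ∈ Finset.range n, (∫ ω, Z i ω ∂μ - c * ∫ ω, θ i ω ∂μ)
          = n * ((1 / (n : ℝ)) * ∑ i ∈ Finset.range n, (∫ ω, Z i ω ∂μ - c * ∫ ω, θ i ω ∂μ)) := by
        field_simp
      rw [heq]
      have : (n:ℝ) * ((1 / (n : ℝ)) * ∑ i ∈ Finset.range n,
          (∫ ω, Z i ω ∂μ - c * ∫ ω, θ i ω ∂μ)) ≤ n * (L/2) := by
        apply mul_le_mul_of_nonneg_left _ hnpos.le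
        linarith
      linarith [this]
    · rw [Set.not_nonempty_iff_eq_empty] at hS
      rw [hS, Real.sInf_empty] at hC3
      exact absurd hC3 (lt_irrefl 0)
  -- truncation level
  set ε : ℝ := δ / (4*c) with hεdef
  have hεpos : 0 < ε := by positivity
  obtain ⟨u₀, hu₀⟩ := hC2 ε hεpos
  set u : ℝ := max u₀ 1 with hudef
  have hu1 : (1:ℝ) ≤ u := le_max_right _ _
  have hupos : (0:ℝ) < u := lt_of_lt_of_le one_pos hu1
  have htr : ∀ i, ∫ ω, Set.indicator {ω | u < θ i ω} (θ i) ω ∂μ ≤ ε := hu₀ u (le_max_left _ _)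
  -- truncated means
  have hminmeas : ∀ i, Measurable fun ω => min (θ i ω) u := fun i => (hθmeas i).min measurable_const
  have hminnn : ∀ i ω, 0 ≤ min (θ i ω) u := fun i ω => le_min (hθpos i ω) hupos.le
  have hminint : ∀ i, Integrable (fun ω => min (θ i ω) u) μ := fun i =>
    (hθint i).mono' (hminmeas i).aestronglyMeasurable (ae_of_all _ fun ω => by
      rw [Real.norm_eq_abs, abs_of_nonneg (hminnn i ω)]
      exact min_le_left _ _)
  have hmnn : ∀ i, 0 ≤ ∫ ω, min (θ i ω) u ∂μ := fun i => integral_nonneg fun ω => hminnn i ω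
  have hmε : ∀ i, ∫ ω, θ i ω ∂μ - ε ≤ ∫ ω, min (θ i ω) u ∂μ := by
    intro i
    have hms : MeasurableSet {ω | u < θ i ω} := measurableSet_lt measurable_const (hθmeas i)
    have hint_ind : Integrable (Set.indicator {ω | u < θ i ω} (θ i)) μ := (hθint i).indicator hms
    have hpt : ∀ ω, θ i ω ≤ min (θ i ω) u + Set.indicator {ω | u < θ i ω} (θ i) ω := by
      intro ω
      by_cases hω : u < θ i ω
      · have hind : Set.indicator {ω | u < θ i ω} (θ i) ω = θ i ω :=
          Set.indicator_of_mem (show ω ∈ {ω | u < θ i ω} from hω) _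
        rw [hind, min_eq_right hω.le]
        linarith
      · have hind : Set.indicator {ω | u < θ i ω} (θ i) ω = 0 :=
          Set.indicator_of_notMem (show ω ∉ {ω | u < θ i ω} from hω) _
        push_neg at hω
        rw [hind, min_eq_left hω]
        simp
    have hintsum : Integrable (fun ω => min (θ i ω) u + Set.indicator {ω | u < θ i ω} (θ i) ω) μ :=
      (hminint i).add hint_ind
    have hmono : ∫ ω, θ i ω ∂μ
        ≤ ∫ ω, (min (θ i ω) u + Set.indicator {ω | u < θ i ω} (θ i) ω) ∂μ :=
      integral_mono (hθint i) hintsum hpt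
    rw [integral_add (hminint i) hint_ind] at hmono
    linarith [htr i]
  -- choice of h
  set K1 : ℝ := 16/γ^2 * C with hK1def
  have hK1pos : 0 < K1 := by positivity
  set K : ℝ := K1 + c^2*u^2 with hKdef
  have hKpos : 0 < K := by positivity
  set h : ℝ := min (γ/2) (min (1/(c*u)) (δ/(4*K))) with hhdef
  have hhpos : 0 < h := lt_min (by positivity) (lt_min (by positivity) (by positivity))
  have hhγ : h ≤ γ/2 := min_le_left _ _
  have hhcu : h*c*u ≤ 1 := by
    have h1 : h ≤ 1/(c*u) := le_trans (min_le_right _ _) (min_le_left _ _)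
    rw [le_div_iff₀ (by positivity : (0:ℝ) < c*u)] at h1
    nlinarith
  have hhK : h*K ≤ δ/4 := by
    have h1 : h ≤ δ/(4*K) := le_trans (min_le_right _ _) (min_le_right _ _)
    rw [le_div_iff₀ (by positivity : (0:ℝ) < 4*K)] at h1
    nlinarith
  -- integrability of exponentials
  have hZexp_int : ∀ i, Integrable (fun ω => Real.exp (h * Z i ω)) μ := by
    intro i
    refine (hexpint i).mono'
      (Real.measurable_exp.comp ((hZmeas i).const_mul h)).aestronglyMeasurable
      (ae_of_all _ fun ω => ?_)
    rw [Real.norm_eq_abs, abs_of_pos (Real.exp_pos _)]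
    exact Real.exp_le_exp.2 (by nlinarith [hZpos i ω])
  have hθexp_int : ∀ i, Integrable (fun ω => Real.exp (-(h*c) * θ i ω)) μ := by
    intro i
    refine (integrable_const (1:ℝ)).mono'
      (Real.measurable_exp.comp ((hθmeas i).const_mul (-(h*c)))).aestronglyMeasurable
      (ae_of_all _ fun ω => ?_)
    rw [Real.norm_eq_abs, abs_of_pos (Real.exp_pos _)]
    calc Real.exp (-(h*c) * θ i ω) ≤ Real.exp 0 :=
          Real.exp_le_exp.2 (by nlinarith [mul_nonneg (mul_nonneg hhpos.le hc.le) (hθpos i ω)])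
      _ = 1 := Real.exp_zero
  -- per-factor bounds
  have ha_le : ∀ i, ∫ ω, Real.exp (h * Z i ω) ∂μ
      ≤ Real.exp (h * ∫ ω, Z i ω ∂μ + h^2 * K1) := by
    intro i
    have hpt : ∀ ω, Real.exp (h * Z i ω)
        ≤ 1 + h * Z i ω + 16/γ^2 * h^2 * Real.exp (γ * Z i ω) := by
      intro ω
      set z := Z i ω with hzdef
      have hz : 0 ≤ z := hZpos i ω
      have ht0 : 0 ≤ h * z := by positivity
      have h1 := LundbergAux.exp_le_one_add_add (h*z) ht0
      have h2 : Real.exp (h*z) ≤ Real.exp (γ*z/2) := Real.exp_le_exp.2 (by nlinarith)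
      have h3 : z ≤ 4/γ * Real.exp (γ*z/4) := by
        have h30 := Real.add_one_le_exp (γ*z/4)
        have hexpge : γ*z/4 ≤ Real.exp (γ*z/4) := by linarith
        have h4γ : (0:ℝ) < 4/γ := by positivity
        have h31 := mul_le_mul_of_nonneg_left hexpge h4γ.le
        have h32 : 4/γ * (γ*z/4) = z := by field_simp
        linarith
      have hee : Real.exp (γ*z/4) * Real.exp (γ*z/4) = Real.exp (γ*z/2) := by
        rw [← Real.exp_add]; congr 1; ring
      have h4 : z^2 ≤ 16/γ^2 * Real.exp (γ*z/2) := by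
        have hmul := mul_le_mul h3 h3 hz (by positivity)
        have hcalc : 4/γ * Real.exp (γ*z/4) * (4/γ * Real.exp (γ*z/4))
            = 16/γ^2 * (Real.exp (γ*z/4) * Real.exp (γ*z/4)) := by ring
        rw [hcalc, hee] at hmul
        calc z^2 = z * z := pow_two z
          _ ≤ 16/γ^2 * Real.exp (γ*z/2) := hmul
      have hee2 : Real.exp (γ*z/2) * Real.exp (γ*z/2) = Real.exp (γ*z) := by
        rw [← Real.exp_add]; congr 1; ring
      have h5 : (h*z)^2 * Real.exp (h*z) ≤ 16/γ^2 * h^2 * Real.exp (γ*z) := by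
        calc (h*z)^2 * Real.exp (h*z) ≤ (h*z)^2 * Real.exp (γ*z/2) := by
              apply mul_le_mul_of_nonneg_left h2 (sq_nonneg _)
          _ = h^2 * (z^2 * Real.exp (γ*z/2)) := by ring
          _ ≤ h^2 * (16/γ^2 * Real.exp (γ*z/2) * Real.exp (γ*z/2)) := by
              apply mul_le_mul_of_nonneg_left _ (sq_nonneg h)
              apply mul_le_mul_of_nonneg_right h4 (Real.exp_pos _).le
          _ = 16/γ^2 * h^2 * (Real.exp (γ*z/2) * Real.exp (γ*z/2)) := by ring
          _ = 16/γ^2 * h^2 * Real.exp (γ*z) := by rw [hee2]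
      linarith
    have hint1 : Integrable (fun ω => 1 + h * Z i ω) μ :=
      (integrable_const (1:ℝ)).add ((hZint i).const_mul h)
    have hint2 : Integrable (fun ω => 16/γ^2 * h^2 * Real.exp (γ * Z i ω)) μ :=
      (hexpint i).const_mul _
    have hint_rhs : Integrable (fun ω => 1 + h * Z i ω + 16/γ^2 * h^2 * Real.exp (γ * Z i ω)) μ :=
      hint1.add hint2
    calc ∫ ω, Real.exp (h * Z i ω) ∂μ
        ≤ ∫ ω, (1 + h * Z i ω + 16/γ^2 * h^2 * Real.exp (γ * Z i ω)) ∂μ :=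
          integral_mono (hZexp_int i) hint_rhs hpt
      _ = 1 + h * ∫ ω, Z i ω ∂μ + 16/γ^2 * h^2 * ∫ ω, Real.exp (γ * Z i ω) ∂μ := by
          rw [integral_add hint1 hint2,
            integral_add (integrable_const (1:ℝ)) ((hZint i).const_mul h),
            integral_const, integral_const_mul, integral_const_mul]
          simp
      _ ≤ 1 + (h * ∫ ω, Z i ω ∂μ + h^2 * K1) := by
          have h0 : (0:ℝ) ≤ 16/γ^2 * h^2 := by positivity
          have : 16/γ^2 * h^2 * ∫ ω, Real.exp (γ * Z i ω) ∂μ ≤ h^2 * K1 := by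
            calc 16/γ^2 * h^2 * ∫ ω, Real.exp (γ * Z i ω) ∂μ
                ≤ 16/γ^2 * h^2 * C := mul_le_mul_of_nonneg_left (hCbd i) h0
              _ = h^2 * K1 := by rw [hK1def]; ring
          linarith
      _ ≤ Real.exp (h * ∫ ω, Z i ω ∂μ + h^2 * K1) := by
          have := Real.add_one_le_exp (h * ∫ ω, Z i ω ∂μ + h^2 * K1)
          linarith
  have hb_le : ∀ i, ∫ ω, Real.exp (-(h*c) * θ i ω) ∂μ
      ≤ Real.exp (-(h*c) * (∫ ω, min (θ i ω) u ∂μ) + h^2*c^2*u^2) := by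
    intro i
    have hpt : ∀ ω, Real.exp (-(h*c) * θ i ω)
        ≤ 1 - h*c*min (θ i ω) u + h^2*c^2*u^2 := by
      intro ω
      have hmn := hminnn i ω
      have hv0 : 0 ≤ h*c*min (θ i ω) u := by positivity
      have hv1 : h*c*min (θ i ω) u ≤ 1 := by
        calc h*c*min (θ i ω) u ≤ h*c*u := by
              apply mul_le_mul_of_nonneg_left (min_le_right _ _) (by positivity)
          _ ≤ 1 := hhcu
      have hb := LundbergAux.exp_neg_le _ hv0 hv1
      have hmono : Real.exp (-(h*c) * θ i ω) ≤ Real.exp (-(h*c*min (θ i ω) u)) :=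
        Real.exp_le_exp.2 (by
          have := mul_le_mul_of_nonneg_left (min_le_left (θ i ω) u) (mul_nonneg hhpos.le hc.le)
          nlinarith)
      have hv2 : (h*c*min (θ i ω) u)^2 ≤ h^2*c^2*u^2 := by
        have h1 : h*c*min (θ i ω) u ≤ h*c*u :=
          mul_le_mul_of_nonneg_left (min_le_right _ _) (by positivity)
        nlinarith [hv0]
      nlinarith [hmono, hb]
    have hint1 : Integrable (fun ω => 1 - h*c*min (θ i ω) u) μ :=
      (integrable_const (1:ℝ)).sub ((hminint i).const_mul (h*c))
    have hint_rhs : Integrable (fun ω => 1 - h*c*min (θ i ω) u + h^2*c^2*u^2) μ :=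
      hint1.add (integrable_const _)
    have hIμ : ∫ ω, (1:ℝ) ∂μ = 1 := by simp
    calc ∫ ω, Real.exp (-(h*c) * θ i ω) ∂μ
        ≤ ∫ ω, (1 - h*c*min (θ i ω) u + h^2*c^2*u^2) ∂μ :=
          integral_mono (hθexp_int i) hint_rhs hpt
      _ = 1 - h*c*(∫ ω, min (θ i ω) u ∂μ) + h^2*c^2*u^2 := by
          rw [integral_add hint1 (integrable_const _),
            integral_sub (integrable_const (1:ℝ)) ((hminint i).const_mul (h*c)),
            integral_const, integral_const, integral_const_mul]
          simp
      _ ≤ Real.exp (-(h*c) * (∫ ω, min (θ i ω) u ∂μ) + h^2*c^2*u^2) := by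
          have := Real.add_one_le_exp (-(h*c) * (∫ ω, min (θ i ω) u ∂μ) + h^2*c^2*u^2)
          linarith
  -- geometric constants
  set r : ℝ := Real.exp (-(h*δ)/2) with hrdef
  have hrpos : 0 < r := Real.exp_pos _
  have hrlt1 : r < 1 := by
    rw [hrdef, ← Real.exp_zero]
    exact Real.exp_lt_exp.2 (by nlinarith)
  set G : ℝ := Real.exp ((N:ℝ) * (h*(C/γ) + h*c*ε + h^2*K + h*δ/2)) with hGdef
  have hGpos : 0 < G := Real.exp_pos _
  -- key bound on the mgf of partial sums
  have key : ∀ n : ℕ,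
      (∫⁻ ω, ENNReal.ofReal (Real.exp (h * ∑ i ∈ Finset.range n, (Z i ω - c * θ i ω))) ∂μ)
        ≤ ENNReal.ofReal (G * r^n) := by
    intro n
    -- pointwise factorization
    have hfact : ∀ ω, ENNReal.ofReal (Real.exp (h * ∑ i ∈ Finset.range n, (Z i ω - c * θ i ω)))
        = (∏ i ∈ Finset.range n, ENNReal.ofReal (Real.exp (h * Z i ω))) *
          ∏ i ∈ Finset.range n, ENNReal.ofReal (Real.exp (-(h*c) * θ i ω)) := by
      intro ω
      rw [Finset.mul_sum, Real.exp_sum]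
      rw [Finset.prod_congr rfl (fun i _ => by
        rw [show h * (Z i ω - c * θ i ω) = h * Z i ω + -(h*c) * θ i ω by ring,
          Real.exp_add] : ∀ i ∈ Finset.range n, Real.exp (h * (Z i ω - c * θ i ω))
            = Real.exp (h * Z i ω) * Real.exp (-(h*c) * θ i ω))]
      rw [ENNReal.ofReal_prod_of_nonneg (fun i _ => by positivity)]
      rw [Finset.prod_congr rfl (fun i (_ : i ∈ Finset.range n) =>
        ENNReal.ofReal_mul (Real.exp_pos _).le)]
      exact Finset.prod_mul_distrib
    -- independence of the two blocks
    have hΦ : Measurable (fun g : ℕ → ℝ =>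
        ∏ i ∈ Finset.range n, ENNReal.ofReal (Real.exp (h * g i))) :=
      Finset.measurable_prod _ fun i _ =>
        ENNReal.measurable_ofReal.comp (Real.measurable_exp.comp (((measurable_pi_apply i : Measurable fun g : ℕ → ℝ => g i)).const_mul h))
    have hΨ : Measurable (fun g : ℕ → ℝ =>
        ∏ i ∈ Finset.range n, ENNReal.ofReal (Real.exp (-(h*c) * g i))) :=
      Finset.measurable_prod _ fun i _ =>
        ENNReal.measurable_ofReal.comp (Real.measurable_exp.comp (((measurable_pi_apply i : Measurable fun g : ℕ → ℝ => g i)).const_mul (-(h*c))))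
    have hAB : IndepFun
        (fun ω => ∏ i ∈ Finset.range n, ENNReal.ofReal (Real.exp (h * Z i ω)))
        (fun ω => ∏ i ∈ Finset.range n, ENNReal.ofReal (Real.exp (-(h*c) * θ i ω))) μ :=
      hmutindep.comp hΦ hΨ
    have hAmeas : Measurable (fun ω => ∏ i ∈ Finset.range n, ENNReal.ofReal (Real.exp (h * Z i ω))) :=
      Finset.measurable_prod _ fun i _ =>
        ENNReal.measurable_ofReal.comp (Real.measurable_exp.comp ((hZmeas i).const_mul h))
    have hBmeas : Measurable (fun ω => ∏ i ∈ Finset.range n, ENNReal.ofReal (Real.exp (-(h*c) * θ i ω))) :=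
      Finset.measurable_prod _ fun i _ =>
        ENNReal.measurable_ofReal.comp (Real.measurable_exp.comp ((hθmeas i).const_mul (-(h*c))))
    -- iIndep within each block
    have hiZ : iIndepFun
        (fun i ω => ENNReal.ofReal (Real.exp (h * Z i ω))) μ :=
      hZindep.comp (fun _ z => ENNReal.ofReal (Real.exp (h * z))) (fun _ =>
        ENNReal.measurable_ofReal.comp (Real.measurable_exp.comp (measurable_id.const_mul h)))
    have hiθ : iIndepFun
        (fun i ω => ENNReal.ofReal (Real.exp (-(h*c) * θ i ω))) μ :=
      hθindep.comp (fun _ z => ENNReal.ofReal (Real.exp (-(h*c) * z))) (fun _ =>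
        ENNReal.measurable_ofReal.comp (Real.measurable_exp.comp (measurable_id.const_mul (-(h*c)))))
    have hfac2 : (∫⁻ ω, ENNReal.ofReal (Real.exp (h * ∑ i ∈ Finset.range n, (Z i ω - c * θ i ω))) ∂μ)
        = (∏ i ∈ Finset.range n, ∫⁻ ω, ENNReal.ofReal (Real.exp (h * Z i ω)) ∂μ) *
          ∏ i ∈ Finset.range n, ∫⁻ ω, ENNReal.ofReal (Real.exp (-(h*c) * θ i ω)) ∂μ := by
      have hpZ := LundbergAux.lintegral_prod_range_indep
        (fun i ω => ENNReal.ofReal (Real.exp (h * Z i ω))) (fun i =>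
        ENNReal.measurable_ofReal.comp (Real.measurable_exp.comp ((hZmeas i).const_mul h))) hiZ n
      have hpθ := LundbergAux.lintegral_prod_range_indep
        (fun i ω => ENNReal.ofReal (Real.exp (-(h*c) * θ i ω))) (fun i =>
        ENNReal.measurable_ofReal.comp (Real.measurable_exp.comp ((hθmeas i).const_mul (-(h*c))))) hiθ n
      calc (∫⁻ ω, ENNReal.ofReal (Real.exp (h * ∑ i ∈ Finset.range n, (Z i ω - c * θ i ω))) ∂μ)
          = ∫⁻ ω, (∏ i ∈ Finset.range n, ENNReal.ofReal (Real.exp (h * Z i ω))) *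
              ∏ i ∈ Finset.range n, ENNReal.ofReal (Real.exp (-(h*c) * θ i ω)) ∂μ :=
            lintegral_congr fun ω => hfact ω
        _ = (∫⁻ ω, ∏ i ∈ Finset.range n, ENNReal.ofReal (Real.exp (h * Z i ω)) ∂μ) *
            ∫⁻ ω, ∏ i ∈ Finset.range n, ENNReal.ofReal (Real.exp (-(h*c) * θ i ω)) ∂μ :=
            lintegral_mul_eq_lintegral_mul_lintegral_of_indepFun''
              hAmeas.aemeasurable hBmeas.aemeasurable hAB
        _ = (∏ i ∈ Finset.range n, ∫⁻ ω, ENNReal.ofReal (Real.exp (h * Z i ω)) ∂μ) *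
            ∏ i ∈ Finset.range n, ∫⁻ ω, ENNReal.ofReal (Real.exp (-(h*c) * θ i ω)) ∂μ := by
            rw [hpZ, hpθ]
    -- convert lintegrals to integrals
    have hlZ : ∀ i, (∫⁻ ω, ENNReal.ofReal (Real.exp (h * Z i ω)) ∂μ)
        = ENNReal.ofReal (∫ ω, Real.exp (h * Z i ω) ∂μ) :=
      fun i => (ofReal_integral_eq_lintegral_ofReal (hZexp_int i)
        (ae_of_all _ fun ω => (Real.exp_pos _).le)).symm
    have hlθ : ∀ i, (∫⁻ ω, ENNReal.ofReal (Real.exp (-(h*c) * θ i ω)) ∂μ)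
        = ENNReal.ofReal (∫ ω, Real.exp (-(h*c) * θ i ω) ∂μ) :=
      fun i => (ofReal_integral_eq_lintegral_ofReal (hθexp_int i)
        (ae_of_all _ fun ω => (Real.exp_pos _).le)).symm
    -- the real-valued product bound
    have hann : ∀ i, 0 ≤ ∫ ω, Real.exp (h * Z i ω) ∂μ :=
      fun i => integral_nonneg fun ω => (Real.exp_pos _).le
    have hbnn : ∀ i, 0 ≤ ∫ ω, Real.exp (-(h*c) * θ i ω) ∂μ :=
      fun i => integral_nonneg fun ω => (Real.exp_pos _).le
    have hreal : (∏ i ∈ Finset.range n, ∫ ω, Real.exp (h * Z i ω) ∂μ) *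
        (∏ i ∈ Finset.range n, ∫ ω, Real.exp (-(h*c) * θ i ω) ∂μ) ≤ G * r^n := by
      have h1 : (∏ i ∈ Finset.range n, ∫ ω, Real.exp (h * Z i ω) ∂μ)
          ≤ Real.exp (∑ i ∈ Finset.range n, (h * ∫ ω, Z i ω ∂μ + h^2 * K1)) := by
        rw [Real.exp_sum]
        exact Finset.prod_le_prod (fun i _ => hann i) (fun i _ => ha_le i)
      have h2 : (∏ i ∈ Finset.range n, ∫ ω, Real.exp (-(h*c) * θ i ω) ∂μ)
          ≤ Real.exp (∑ i ∈ Finset.range n, (-(h*c) * (∫ ω, min (θ i ω) u ∂μ) + h^2*c^2*u^2)) := by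
        rw [Real.exp_sum]
        exact Finset.prod_le_prod (fun i _ => hbnn i) (fun i _ => hb_le i)
      have hterm : ∀ i, (h * ∫ ω, Z i ω ∂μ + h^2 * K1)
          + (-(h*c) * (∫ ω, min (θ i ω) u ∂μ) + h^2*c^2*u^2)
          ≤ h * (∫ ω, Z i ω ∂μ - c * ∫ ω, θ i ω ∂μ) + (h*c*ε + h^2*K) := by
        intro i
        have hq := mul_le_mul_of_nonneg_left (hmε i) (mul_nonneg hhpos.le hc.le)
        have hKeq : h^2 * K1 + h^2*c^2*u^2 = h^2*K := by rw [hKdef]; ring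
        nlinarith [hq, hKeq]
      have hsum : (∑ i ∈ Finset.range n, (h * ∫ ω, Z i ω ∂μ + h^2 * K1))
          + (∑ i ∈ Finset.range n, (-(h*c) * (∫ ω, min (θ i ω) u ∂μ) + h^2*c^2*u^2))
          ≤ h * (∑ i ∈ Finset.range n, (∫ ω, Z i ω ∂μ - c * ∫ ω, θ i ω ∂μ))
            + n * (h*c*ε + h^2*K) := by
        rw [← Finset.sum_add_distrib]
        calc ∑ i ∈ Finset.range n, ((h * ∫ ω, Z i ω ∂μ + h^2 * K1)
              + (-(h*c) * (∫ ω, min (θ i ω) u ∂μ) + h^2*c^2*u^2))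
            ≤ ∑ i ∈ Finset.range n, (h * (∫ ω, Z i ω ∂μ - c * ∫ ω, θ i ω ∂μ) + (h*c*ε + h^2*K)) :=
              Finset.sum_le_sum (fun i _ => hterm i)
          _ = h * (∑ i ∈ Finset.range n, (∫ ω, Z i ω ∂μ - c * ∫ ω, θ i ω ∂μ))
              + n * (h*c*ε + h^2*K) := by
              rw [Finset.sum_add_distrib, ← Finset.mul_sum, Finset.sum_const, Finset.card_range]
              ring
      have hexpbd : h * (∑ i ∈ Finset.range n, (∫ ω, Z i ω ∂μ - c * ∫ ω, θ i ω ∂μ))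
          + n * (h*c*ε + h^2*K)
          ≤ (N:ℝ) * (h*(C/γ) + h*c*ε + h^2*K + h*δ/2) + n * (-(h*δ)/2) := by
        have hcε : h*c*ε = h*δ/4 := by rw [hεdef]; field_simp
        have hh2K : h^2*K ≤ h*δ/4 := by nlinarith [hhK, hhpos]
        rcases le_or_gt N n with hn | hn
        · have hd := hdrift n hn
          have hNterm : (0:ℝ) ≤ (N:ℝ) * (h*(C/γ) + h*c*ε + h^2*K + h*δ/2) := by
            apply mul_nonneg (Nat.cast_nonneg N)
            have : 0 ≤ h*(C/γ) := by positivity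
            nlinarith [sq_nonneg h, hKpos, hεpos, hδpos, hhpos]
          nlinarith [hhpos, (Nat.cast_nonneg n : (0:ℝ) ≤ (n:ℝ))]
        · -- n < N
          have hd : (∑ i ∈ Finset.range n, (∫ ω, Z i ω ∂μ - c * ∫ ω, θ i ω ∂μ)) ≤ n * (C/γ) := by
            calc (∑ i ∈ Finset.range n, (∫ ω, Z i ω ∂μ - c * ∫ ω, θ i ω ∂μ))
                ≤ ∑ i ∈ Finset.range n, (C/γ) := Finset.sum_le_sum (fun i _ => by
                  have := hEZ i; have := hEθnn i; nlinarith)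
              _ = n * (C/γ) := by rw [Finset.sum_const, Finset.card_range]; ring
          have hnN : (n:ℝ) ≤ (N:ℝ) := by exact_mod_cast hn.le
          have hpos' : 0 ≤ h*(C/γ) + h*c*ε + h^2*K + h*δ/2 := by positivity
          nlinarith [hhpos, (Nat.cast_nonneg n : (0:ℝ) ≤ (n:ℝ))]
      calc (∏ i ∈ Finset.range n, ∫ ω, Real.exp (h * Z i ω) ∂μ) *
            (∏ i ∈ Finset.range n, ∫ ω, Real.exp (-(h*c) * θ i ω) ∂μ)
          ≤ Real.exp (∑ i ∈ Finset.range n, (h * ∫ ω, Z i ω ∂μ + h^2 * K1)) *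
            Real.exp (∑ i ∈ Finset.range n, (-(h*c) * (∫ ω, min (θ i ω) u ∂μ) + h^2*c^2*u^2)) :=
            mul_le_mul h1 h2 (Finset.prod_nonneg fun i _ => hbnn i) (Real.exp_pos _).le
        _ = Real.exp ((∑ i ∈ Finset.range n, (h * ∫ ω, Z i ω ∂μ + h^2 * K1))
            + ∑ i ∈ Finset.range n, (-(h*c) * (∫ ω, min (θ i ω) u ∂μ) + h^2*c^2*u^2)) :=
            (Real.exp_add _ _).symm
        _ ≤ Real.exp ((N:ℝ) * (h*(C/γ) + h*c*ε + h^2*K + h*δ/2) + n * (-(h*δ)/2)) :=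
            Real.exp_le_exp.2 (le_trans hsum hexpbd)
        _ = G * r^n := by
            rw [Real.exp_add, hGdef, hrdef, ← Real.exp_nat_mul]
    rw [hfac2]
    calc (∏ i ∈ Finset.range n, ∫⁻ ω, ENNReal.ofReal (Real.exp (h * Z i ω)) ∂μ) *
          ∏ i ∈ Finset.range n, ∫⁻ ω, ENNReal.ofReal (Real.exp (-(h*c) * θ i ω)) ∂μ
        = ENNReal.ofReal ((∏ i ∈ Finset.range n, ∫ ω, Real.exp (h * Z i ω) ∂μ) *
            (∏ i ∈ Finset.range n, ∫ ω, Real.exp (-(h*c) * θ i ω) ∂μ)) := by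
          rw [Finset.prod_congr rfl (fun i (_ : i ∈ Finset.range n) => hlZ i),
            Finset.prod_congr rfl (fun i (_ : i ∈ Finset.range n) => hlθ i),
            ← ENNReal.ofReal_prod_of_nonneg (fun i _ => hann i),
            ← ENNReal.ofReal_prod_of_nonneg (fun i _ => hbnn i),
            ← ENNReal.ofReal_mul (Finset.prod_nonneg fun i _ => hann i)]
      _ ≤ ENNReal.ofReal (G * r^n) := ENNReal.ofReal_le_ofReal hreal
  -- final assembly
  set D : ℝ := G * r / (1 - r) with hDdef
  have h1r : 0 < 1 - r := by linarith
  have hDpos : 0 < D := by positivity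
  refine ⟨h/2, by positivity, max 0 (2 * Real.log D / h), le_max_left _ _, ?_⟩
  intro x hx
  have hxD : Real.log D ≤ h * x / 2 := by
    have : 2 * Real.log D / h ≤ x := le_trans (le_max_right _ _) hx
    rw [div_le_iff₀ hhpos] at this
    nlinarith
  have hsetEq : {ω | ∃ n : ℕ, x < ∑ i ∈ Finset.range (n + 1), (Z i ω - c * θ i ω)}
      = ⋃ n : ℕ, {ω | x < ∑ i ∈ Finset.range (n + 1), (Z i ω - c * θ i ω)} := by
    ext ω; simp [Set.mem_iUnion]
  have hSmeas : ∀ n : ℕ, Measurable fun ω => ∑ i ∈ Finset.range (n+1), (Z i ω - c * θ i ω) :=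
    fun n => Finset.measurable_sum _ fun i _ => (hZmeas i).sub ((hθmeas i).const_mul c)
  rw [hsetEq]
  calc μ (⋃ n : ℕ, {ω | x < ∑ i ∈ Finset.range (n + 1), (Z i ω - c * θ i ω)})
      ≤ ∑' n : ℕ, μ {ω | x < ∑ i ∈ Finset.range (n + 1), (Z i ω - c * θ i ω)} :=
        measure_iUnion_le _
    _ ≤ ∑' n : ℕ, (ENNReal.ofReal (Real.exp (-(h*x)) * (G*r)) * (ENNReal.ofReal r)^n) := by
        apply ENNReal.tsum_le_tsum
        intro n
        calc μ {ω | x < ∑ i ∈ Finset.range (n + 1), (Z i ω - c * θ i ω)}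
            ≤ ENNReal.ofReal (Real.exp (-(h * x))) *
              ∫⁻ ω, ENNReal.ofReal (Real.exp (h * ∑ i ∈ Finset.range (n+1), (Z i ω - c * θ i ω))) ∂μ :=
              LundbergAux.chernoff (hSmeas n) h x hhpos
          _ ≤ ENNReal.ofReal (Real.exp (-(h * x))) * ENNReal.ofReal (G * r^(n+1)) :=
              mul_le_mul_right (key (n+1)) _
          _ = ENNReal.ofReal (Real.exp (-(h*x)) * (G*r)) * (ENNReal.ofReal r)^n := by
              rw [← ENNReal.ofReal_pow hrpos.le,
                ← ENNReal.ofReal_mul (by positivity : (0:ℝ) ≤ Real.exp (-(h*x)) * (G*r)),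
                ← ENNReal.ofReal_mul (Real.exp_pos _).le]
              congr 1
              ring
    _ = ENNReal.ofReal (Real.exp (-(h*x)) * (G*r)) * (1 - ENNReal.ofReal r)⁻¹ := by
        rw [ENNReal.tsum_mul_left, ENNReal.tsum_geometric]
    _ = ENNReal.ofReal (Real.exp (-(h*x)) * D) := by
        rw [show (1 : ENNReal) - ENNReal.ofReal r = ENNReal.ofReal (1 - r) by
            rw [ENNReal.ofReal_sub 1 hrpos.le, ENNReal.ofReal_one],
          ← ENNReal.ofReal_inv_of_pos h1r,
          ← ENNReal.ofReal_mul (by positivity : (0:ℝ) ≤ Real.exp (-(h*x)) * (G*r))]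
        congr 1
        rw [hDdef]
        ring
    _ ≤ ENNReal.ofReal (Real.exp (-(h/2) * x)) := by
        apply ENNReal.ofReal_le_ofReal
        have hD_le : D ≤ Real.exp (h*x/2) := by
          rw [← Real.exp_log hDpos]
          exact Real.exp_le_exp.2 hxD
        calc Real.exp (-(h*x)) * D ≤ Real.exp (-(h*x)) * Real.exp (h*x/2) :=
              mul_le_mul_of_nonneg_left hD_le (Real.exp_pos _).le
          _ = Real.exp (-(h*x) + h*x/2) := (Real.exp_add _ _).symm
          _ = Real.exp (-(h/2) * x) := by ring_nf
end

section
/- Let Z_i ≥ 0 and θ_i ≥ 0 be random variables with Z_i independent of θ_i for each i, c > 0. Assume sup_i E[e^{γ Z_i}] < ∞ for some γ > 0 and lim_{u→∞} sup_i E[θ_i 1_{θ_i > u}] = 0. Then lim_{u→∞} sup_i E[Z_i 1_{Z_i − cθ_i ≤ -u}] = 0. -/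
open MeasureTheory ProbabilityTheory

/-- Under uniformly bounded exponential moments of the claims and uniform
integrability of the interarrival times, `sup_i E[Z_i 1_{Z_i − cθ_i ≤ −u}] → 0`. -/
theorem claims_truncated_expectation_tendsto_zero
    {Ω : Type*} [MeasurableSpace Ω] (μ : Measure Ω) [IsProbabilityMeasure μ]
    (Z θ : ℕ → Ω → ℝ) (hZmeas : ∀ i, Measurable (Z i)) (hθmeas : ∀ i, Measurable (θ i))
    (hZpos : ∀ i ω, 0 ≤ Z i ω) (hθpos : ∀ i ω, 0 ≤ θ i ω)
    (hindep : ∀ i, IndepFun (Z i) (θ i) μ)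
    (hZint : ∀ i, Integrable (Z i) μ) (hθint : ∀ i, Integrable (θ i) μ)
    (c : ℝ) (hc : 0 < c) (γ : ℝ) (hγ : 0 < γ)
    (hexpint : ∀ i, Integrable (fun ω => Real.exp (γ * Z i ω)) μ)
    (hC1 : ∃ C : ℝ, ∀ i, ∫ ω, Real.exp (γ * Z i ω) ∂μ ≤ C)
    (hC2 : ∀ ε > (0 : ℝ), ∃ u₀ : ℝ, ∀ u ≥ u₀, ∀ i,
      ∫ ω, Set.indicator {ω | u < θ i ω} (θ i) ω ∂μ ≤ ε) :
    ∀ ε > (0 : ℝ), ∃ u₀ : ℝ, ∀ u ≥ u₀, ∀ i,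
      ∫ ω, Set.indicator {ω | Z i ω - c * θ i ω ≤ -u} (Z i) ω ∂μ ≤ ε := by
  obtain ⟨C, hC⟩ := hC1
  obtain ⟨u₁, hu₁⟩ := hC2 1 one_pos
  intro ε hε
  set D : ℝ := max C 1 with hDdef
  have hDpos : (0:ℝ) < D := lt_of_lt_of_le one_pos (le_max_right _ _)
  refine ⟨max (2*c*u₁) (max (2*c*D/(γ*ε)) 1), fun u hu i => ?_⟩
  have hu1 : (1:ℝ) ≤ u := le_trans (le_trans (le_max_right _ _) (le_max_right _ _)) hu
  have hupos : (0:ℝ) < u := lt_of_lt_of_le one_pos hu1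
  have h2c : (0:ℝ) < 2*c := by linarith
  set v : ℝ := u/(2*c) with hvdef
  have hvpos : 0 < v := div_pos hupos h2c
  have hvu₁ : u₁ ≤ v := by
    have h : 2*c*u₁ ≤ u := le_trans (le_max_left _ _) hu
    rw [hvdef, le_div_iff₀ h2c]; nlinarith
  -- E[Z i] ≤ D/γ
  have hEZ : ∫ ω, Z i ω ∂μ ≤ D/γ := by
    have hle : ∀ ω, Z i ω ≤ Real.exp (γ * Z i ω) / γ := by
      intro ω
      rw [le_div_iff₀ hγ]
      have h1 : γ * Z i ω + 1 ≤ Real.exp (γ * Z i ω) := Real.add_one_le_exp _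
      nlinarith
    calc ∫ ω, Z i ω ∂μ ≤ ∫ ω, Real.exp (γ * Z i ω) / γ ∂μ :=
          integral_mono (hZint i) ((hexpint i).div_const γ) hle
      _ = (∫ ω, Real.exp (γ * Z i ω) ∂μ) / γ := integral_div γ _
      _ ≤ D/γ := by
          gcongr
          exact le_trans (hC i) (le_max_left _ _)
  set A : Set Ω := {ω | Z i ω - c * θ i ω ≤ -u} with hAdef
  set B : Set Ω := {ω | v < θ i ω} with hBdef
  have hAmeas : MeasurableSet A := by
    apply measurableSet_le ((hZmeas i).sub (measurable_const.mul (hθmeas i))) measurable_const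
  have hBmeas : MeasurableSet B := measurableSet_lt measurable_const (hθmeas i)
  have hAB : A ⊆ B := by
    intro ω hω
    simp only [hAdef, hBdef, Set.mem_setOf_eq] at hω ⊢
    have h1 := hZpos i ω
    rw [hvdef, div_lt_iff₀ h2c]
    nlinarith
  -- step 1: monotonicity
  have step1 : ∫ ω, Set.indicator A (Z i) ω ∂μ ≤ ∫ ω, Set.indicator B (Z i) ω ∂μ := by
    apply integral_mono ((hZint i).indicator hAmeas) ((hZint i).indicator hBmeas)
    exact Set.indicator_le_indicator_of_subset hAB (fun ω => hZpos i ω)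
  -- step 2: factorization by independence
  set g : ℝ → ℝ := Set.indicator (Set.Ioi v) (fun _ => 1) with hgdef
  have hgmeas : Measurable g := measurable_const.indicator measurableSet_Ioi
  have hcomp : ∀ ω, Set.indicator B (Z i) ω = Z i ω * g (θ i ω) := by
    intro ω
    by_cases h : v < θ i ω <;>
      simp [hgdef, hBdef, Set.indicator, Set.mem_Ioi, h]
  have hgθeq : (fun ω => g (θ i ω)) = Set.indicator B (fun _ => (1:ℝ)) := by
    funext ω
    by_cases h : v < θ i ω <;>
      simp [hgdef, hBdef, Set.indicator, Set.mem_Ioi, h]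
  have hgθint : Integrable (fun ω => g (θ i ω)) μ := by
    rw [hgθeq]; exact (integrable_const 1).indicator hBmeas
  have hindep' : IndepFun (Z i) (fun ω => g (θ i ω)) μ :=
    (hindep i).comp measurable_id hgmeas
  have step2 : ∫ ω, Set.indicator B (Z i) ω ∂μ
      = (∫ ω, Z i ω ∂μ) * (μ B).toReal := by
    calc ∫ ω, Set.indicator B (Z i) ω ∂μ = ∫ ω, Z i ω * g (θ i ω) ∂μ := by
          simp_rw [hcomp]
      _ = (∫ ω, Z i ω ∂μ) * ∫ ω, g (θ i ω) ∂μ :=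
          hindep'.integral_fun_mul_eq_mul_integral (hZint i).aestronglyMeasurable hgθint.aestronglyMeasurable
      _ = (∫ ω, Z i ω ∂μ) * (μ B).toReal := by
          rw [hgθeq, integral_indicator_const (1:ℝ) hBmeas, smul_eq_mul, mul_one, measureReal_def]
  -- step 3: Markov-type bound on μ B
  have hθtrunc : ∫ ω, Set.indicator B (θ i) ω ∂μ ≤ 1 := hu₁ v hvu₁ i
  have step3 : v * (μ B).toReal ≤ 1 := by
    have h1 : v * (μ B).toReal = ∫ ω, Set.indicator B (fun _ => v) ω ∂μ := by
      rw [integral_indicator_const v hBmeas, smul_eq_mul, mul_comm, measureReal_def]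
    have h2 : ∫ ω, Set.indicator B (fun _ => v) ω ∂μ ≤ ∫ ω, Set.indicator B (θ i) ω ∂μ := by
      apply integral_mono ((integrable_const v).indicator hBmeas) ((hθint i).indicator hBmeas)
      intro ω
      by_cases h : ω ∈ B
      · simp only [Set.indicator_of_mem h]
        exact le_of_lt h
      · simp [Set.indicator_of_notMem h]
    linarith
  have hμB : (μ B).toReal ≤ 1 / v := by
    rw [le_div_iff₀ hvpos]; linarith
  have hμBnn : 0 ≤ (μ B).toReal := ENNReal.toReal_nonneg
  have hEZnn : 0 ≤ ∫ ω, Z i ω ∂μ := integral_nonneg (fun ω => hZpos i ω)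
  -- combine
  have hkey : ∫ ω, Set.indicator A (Z i) ω ∂μ ≤ (D/γ) * (1/v) := by
    calc ∫ ω, Set.indicator A (Z i) ω ∂μ ≤ (∫ ω, Z i ω ∂μ) * (μ B).toReal := by
          rw [← step2]; exact step1
      _ ≤ (D/γ) * (1/v) := mul_le_mul hEZ hμB hμBnn (le_of_lt (div_pos hDpos hγ))
  refine hkey.trans ?_
  have hfin : 2*c*D/(γ*ε) ≤ u := le_trans (le_trans (le_max_left _ _) (le_max_right _ _)) hu
  rw [hvdef]
  rw [div_le_iff₀ (mul_pos hγ hε)] at hfin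
  have : (D/γ) * (1/(u/(2*c))) = 2*c*D/(γ*u) := by
    field_simp
  rw [this, div_le_iff₀ (mul_pos hγ hupos)]
  nlinarith
end
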